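/- For each f ∈ F let f# be a fresh marked symbol of the same arity and F# = {f# | f ∈ F}; for a non-variable term t = f(t_1,…,t_n) over F write t# = f#(t_1,…,t_n). Let A be a weakly monotone well-founded ordered (F ∪ F#)-algebra and ≿ a precedence on F. Define on non-variable F-terms s = f(…), t = g(…): s ⊒∼ t iff s# >_A t#, or (s# ≥_A t# and f ≿ g); s ⊐ t iff s# >_A t#, or (s# ≥_A t# and f ≻ g); and let ≳ be the restriction of ≥_A to T(F,V). Then (≳, ⊒∼, ⊐) is a reduction triple on T(F,V): ≳ is a rewrite preorder, (⊒∼, ⊐) is a stable order pair on T(F,V)∖V with ⊐ well-founded, and ≳ and ⊒∼ have the harmony property. -/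

import Mathlib

/-- First-order terms over a signature `F` with arity function `ar` and variables `V`. -/
inductive Term (F : Type) (ar : F → ℕ) (V : Type) : Type where
  | var : V → Term F ar V
  | app : (f : F) → (Fin (ar f) → Term F ar V) → Term F ar V

namespace Term

variable {F V : Type} {ar : F → ℕ}

/-- Application of a substitution `σ : V → Term F ar V` to a term. -/
def subst (σ : V → Term F ar V) : Term F ar V → Term F ar V
  | var v => σ v
  | app f args => app f (fun i => (args i).subst σ)

/-- Interpretation of a term in an `F`-algebra with carrier `A` under assignment `α`. -/
def eval {A : Type} (I : (f : F) → (Fin (ar f) → A) → A) (α : V → A) :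
    Term F ar V → A
  | var v => α v
  | app f args => I f (fun i => (args i).eval I α)

/-- A term is a non-variable term (function application). -/
def IsApp : Term F ar V → Prop
  | var _ => False
  | app _ _ => True

end Term

section Algebra

variable {F V A : Type}

/-- `RC lt a b` : reflexive closure of the strict order `lt`, i.e. `a ≤ b`. -/
def RC (lt : A → A → Prop) (a b : A) : Prop := lt a b ∨ a = b

variable (ar : F → ℕ) (I : (f : F) → (Fin (ar f) → A) → A) (lt : A → A → Prop)

/-- `s >_A t` : `[α](t) < [α](s)` for every assignment `α`. -/
def GTA (s t : Term F ar V) : Prop := ∀ α : V → A, lt (t.eval I α) (s.eval I α)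

/-- `s ≥_A t` : `[α](t) ≤ [α](s)` for every assignment `α`. -/
def GEA (s t : Term F ar V) : Prop := ∀ α : V → A, RC lt (t.eval I α) (s.eval I α)

/-- The algebra is simple: `f_A(a_1, …, a_n) ≥ a_i`. -/
def Simple : Prop := ∀ (f : F) (as : Fin (ar f) → A) (i : Fin (ar f)), RC lt (as i) (I f as)

/-- The algebra is weakly monotone: `a_i > b` implies
`f_A(a_1,…,a_i,…,a_n) ≥ f_A(a_1,…,b,…,a_n)`. -/
def WeaklyMonotone : Prop :=
  ∀ (f : F) (as : Fin (ar f) → A) (i : Fin (ar f)) (b : A),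
    lt b (as i) → RC lt (I f (Function.update as i b)) (I f as)

end Algebra

section WPO

variable {F V A : Type} (ar : F → ℕ) (I : (f : F) → (Fin (ar f) → A) → A)
  (lt : A → A → Prop) (prec : F → F → Prop)

mutual
  /-- The weighted path order induced by the algebra `(A, I, lt)` and the precedence `prec`. -/
  inductive WPO : Term F ar V → Term F ar V → Prop where
    /-- (1) `s >_A t`. -/
    | alg {s t} : GTA ar I lt s t → WPO s t
    /-- (2a) `s ≥_A t` and `s_i >_wpo t`. -/
    | sub {f ss t} (i : Fin (ar f)) :
        GEA ar I lt (Term.app f ss) t → WPO (ss i) t → WPO (Term.app f ss) t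
    /-- (2a) `s ≥_A t` and `s_i = t`. -/
    | subEq {f ss t} (i : Fin (ar f)) :
        GEA ar I lt (Term.app f ss) t → ss i = t → WPO (Term.app f ss) t
    /-- (2b-i) `s ≥_A t`, `s >_wpo t_j` for all `j`, and `f ≻ g`. -/
    | prc {f ss g ts} :
        GEA ar I lt (Term.app f ss) (Term.app g ts) →
        (∀ j, WPO (Term.app f ss) (ts j)) →
        prec f g → ¬ prec g f → WPO (Term.app f ss) (Term.app g ts)
    /-- (2b-ii) `s ≥_A t`, `s >_wpo t_j` for all `j`, `f ≿ g` and lex comparison of arguments. -/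
    | lex {f ss g ts} :
        GEA ar I lt (Term.app f ss) (Term.app g ts) →
        (∀ j, WPO (Term.app f ss) (ts j)) →
        prec f g → WPOLex (List.ofFn ss) (List.ofFn ts) →
        WPO (Term.app f ss) (Term.app g ts)

  /-- Lexicographic extension of `WPO` to argument lists (of possibly different lengths). -/
  inductive WPOLex : List (Term F ar V) → List (Term F ar V) → Prop where
    | head {s t l₁ l₂} : WPO s t → WPOLex (s :: l₁) (t :: l₂)
    | tail {s l₁ l₂} : WPOLex l₁ l₂ → WPOLex (s :: l₁) (s :: l₂)
    | longer {s l₁} : WPOLex (s :: l₁) []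
end

end WPO

section SPO

variable {F V : Type} {ar : F → ℕ} (qge qgt : Term F ar V → Term F ar V → Prop)

mutual
  /-- The semantic path order induced by the order pair `(qge, qgt)` (`⊒∼`, `⊐`). -/
  inductive SPO : Term F ar V → Term F ar V → Prop where
    /-- (1) `s_i >_spo t`. -/
    | sub {f ss t} (i : Fin (ar f)) : SPO (ss i) t → SPO (Term.app f ss) t
    /-- (1) `s_i = t`. -/
    | subEq {f ss t} (i : Fin (ar f)) : ss i = t → SPO (Term.app f ss) t
    /-- (2a) `s >_spo t_j` for all `j` and `s ⊐ t`. -/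
    | gt {f ss g ts} : (∀ j, SPO (Term.app f ss) (ts j)) →
        qgt (Term.app f ss) (Term.app g ts) → SPO (Term.app f ss) (Term.app g ts)
    /-- (2b) `s >_spo t_j` for all `j`, `s ⊒∼ t` and lex comparison of arguments. -/
    | lex {f ss g ts} : (∀ j, SPO (Term.app f ss) (ts j)) →
        qge (Term.app f ss) (Term.app g ts) →
        SPOLex (List.ofFn ss) (List.ofFn ts) → SPO (Term.app f ss) (Term.app g ts)

  /-- Lexicographic extension of `SPO` to argument lists. -/
  inductive SPOLex : List (Term F ar V) → List (Term F ar V) → Prop where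
    | head {s t l₁ l₂} : SPO s t → SPOLex (s :: l₁) (t :: l₂)
    | tail {s l₁ l₂} : SPOLex l₁ l₂ → SPOLex (s :: l₁) (s :: l₂)
    | longer {s l₁} : SPOLex (s :: l₁) []
end

end SPO

section Props

variable {F V : Type} {ar : F → ℕ}

/-- Closure under contexts: replacing one argument. -/
def ClosedCtx (R : Term F ar V → Term F ar V → Prop) : Prop :=
  ∀ (f : F) (args : Fin (ar f) → Term F ar V) (i : Fin (ar f)) (s t : Term F ar V),
    R s t → R (Term.app f (Function.update args i s)) (Term.app f (Function.update args i t))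

/-- Closure under substitutions. -/
def ClosedSubst (R : Term F ar V → Term F ar V → Prop) : Prop :=
  ∀ (σ : V → Term F ar V) (s t : Term F ar V), R s t → R (s.subst σ) (t.subst σ)

/-- A reduction order: a well-founded strict order closed under contexts and substitutions. -/
def ReductionOrder (R : Term F ar V → Term F ar V → Prop) : Prop :=
  (∀ s, ¬ R s s) ∧ Transitive R ∧ WellFounded (fun s t => R t s) ∧
    ClosedCtx R ∧ ClosedSubst R

/-- `Subterm t s` : `t` is a subterm of `s`. -/
inductive Subterm : Term F ar V → Term F ar V → Prop where
  | refl {t} : Subterm t t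
  | arg {t f ss} (i : Fin (ar f)) : Subterm t (ss i) → Subterm t (Term.app f ss)

/-- `ProperSubterm t s` : `t` is a proper subterm of `s`. -/
def ProperSubterm (t s : Term F ar V) : Prop :=
  ∃ (f : F) (ss : Fin (ar f) → Term F ar V) (i : Fin (ar f)),
    s = Term.app f ss ∧ Subterm t (ss i)

/-- The rewrite relation of a TRS `R`: closure of the rules under substitutions and contexts. -/
inductive Rewrite (R : Set (Term F ar V × Term F ar V)) : Term F ar V → Term F ar V → Prop where
  | rule {l r} (σ : V → Term F ar V) : (l, r) ∈ R → Rewrite R (l.subst σ) (r.subst σ)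
  | ctx {s t} (f : F) (args : Fin (ar f) → Term F ar V) (i : Fin (ar f)) :
      Rewrite R s t →
      Rewrite R (Term.app f (Function.update args i s)) (Term.app f (Function.update args i t))

end Props

section Pair

variable {F V A : Type} (ar : F → ℕ) (I : (f : F) → (Fin (ar f) → A) → A)
  (lt : A → A → Prop) (prec : F → F → Prop)

/-- `s ⊒∼ t` : both non-variable, and `s >_A t`, or `s ≥_A t` and `root(s) ≿ root(t)`. -/
def QGE (s t : Term F ar V) : Prop :=
  ∃ (f : F) (ss : Fin (ar f) → Term F ar V) (g : F) (ts : Fin (ar g) → Term F ar V),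
    s = Term.app f ss ∧ t = Term.app g ts ∧
      (GTA ar I lt s t ∨ (GEA ar I lt s t ∧ prec f g))

/-- `s ⊐ t` : both non-variable, and `s >_A t`, or `s ≥_A t` and `root(s) ≻ root(t)`. -/
def QGT (s t : Term F ar V) : Prop :=
  ∃ (f : F) (ss : Fin (ar f) → Term F ar V) (g : F) (ts : Fin (ar g) → Term F ar V),
    s = Term.app f ss ∧ t = Term.app g ts ∧
      (GTA ar I lt s t ∨ (GEA ar I lt s t ∧ prec f g ∧ ¬ prec g f))

variable (Im : (f : F) → (Fin (ar f) → A) → A)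

/-- Interpretation of the marked term `t♯` (root symbol interpreted by `Im`). -/
def evalSharp (α : V → A) : Term F ar V → A
  | .var v => α v
  | .app f ts => Im f (fun i => (ts i).eval I α)

/-- `s♯ >_A t♯`. -/
def GTAS (s t : Term F ar V) : Prop :=
  ∀ α : V → A, lt (evalSharp ar I Im α t) (evalSharp ar I Im α s)

/-- `s♯ ≥_A t♯`. -/
def GEAS (s t : Term F ar V) : Prop :=
  ∀ α : V → A, RC lt (evalSharp ar I Im α t) (evalSharp ar I Im α s)

/-- Marked version of `⊒∼` : `s♯ >_A t♯`, or `s♯ ≥_A t♯` and `root(s) ≿ root(t)`. -/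
def QGES (s t : Term F ar V) : Prop :=
  ∃ (f : F) (ss : Fin (ar f) → Term F ar V) (g : F) (ts : Fin (ar g) → Term F ar V),
    s = Term.app f ss ∧ t = Term.app g ts ∧
      (GTAS ar I lt Im s t ∨ (GEAS ar I lt Im s t ∧ prec f g))

/-- Marked version of `⊐` : `s♯ >_A t♯`, or `s♯ ≥_A t♯` and `root(s) ≻ root(t)`. -/
def QGTS (s t : Term F ar V) : Prop :=
  ∃ (f : F) (ss : Fin (ar f) → Term F ar V) (g : F) (ts : Fin (ar g) → Term F ar V),
    s = Term.app f ss ∧ t = Term.app g ts ∧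
      (GTAS ar I lt Im s t ∨ (GEAS ar I lt Im s t ∧ prec f g ∧ ¬ prec g f))

/-- The generalized weighted path order: `s ≥_A t` and `s >_spo t` for the SPO induced
from the marked order pair. -/
def GWPO (s t : Term F ar V) : Prop :=
  GEA ar I lt s t ∧ SPO (QGES ar I lt prec Im) (QGTS ar I lt prec Im) s t

end Pair

section AuxLemmas

variable {F V A : Type} {ar : F → ℕ}

theorem eval_subst' (I : (f : F) → (Fin (ar f) → A) → A) (σ : V → Term F ar V) (α : V → A) :
    ∀ t : Term F ar V, (t.subst σ).eval I α = t.eval I (fun v => (σ v).eval I α)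
  | .var v => rfl
  | .app f ts => congrArg (I f) (funext fun i => eval_subst' I σ α (ts i))

theorem eval_update' (I : (f : F) → (Fin (ar f) → A) → A) (α : V → A) (f : F)
    (args : Fin (ar f) → Term F ar V) (i : Fin (ar f)) (s : Term F ar V) :
    (fun j => (Function.update args i s j).eval I α)
      = Function.update (fun j => (args j).eval I α) i (s.eval I α) := by
  funext j
  by_cases h : j = i
  · subst h; simp
  · simp [Function.update_of_ne h]

theorem mono_aux (I : (f : F) → (Fin (ar f) → A) → A) (lt : A → A → Prop)
    (hmono : WeaklyMonotone ar I lt) (f : F) (E : Fin (ar f) → A) (i : Fin (ar f)) (x : A)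
    (h : RC lt x (E i)) : RC lt (I f (Function.update E i x)) (I f E) := by
  rcases h with h | h
  · exact hmono f E i x h
  · right; rw [h, Function.update_eq_self]

end AuxLemmas

/-- For a weakly monotone well-founded ordered `(F ∪ F♯)`-algebra
(interpretations `I` for `F` and `Im` for the marked copies `F♯`) and a precedence on `F`,
the triple `(≥_A, ⊒∼, ⊐)` (here `GEA`, `QGES`, `QGTS`) is a reduction triple: `≥_A` is a
rewrite preorder, `(⊒∼, ⊐)` is a stable order pair on non-variable terms with `⊐`
well-founded, and `≥_A` and `⊒∼` have the harmony property. -/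
theorem marked_reduction_triple
    {F V A : Type} [Fintype F] [Countable V] [Infinite V] [Nonempty A]
    (ar : F → ℕ) (I Im : (f : F) → (Fin (ar f) → A) → A) (lt : A → A → Prop)
    (lt_irrefl : ∀ a, ¬ lt a a) (lt_trans : Transitive lt)
    (lt_wf : WellFounded lt)
    (hmono : WeaklyMonotone ar I lt) (hmonoS : WeaklyMonotone ar Im lt)
    (prec : F → F → Prop) (prec_refl : ∀ f, prec f f)
    (prec_trans : ∀ f g h, prec f g → prec g h → prec f h) :
    -- `≥_A` is a rewrite preorder on `T(F,V)`
    (∀ t : Term F ar V, GEA ar I lt t t) ∧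
    Transitive (GEA (V := V) ar I lt) ∧
    ClosedCtx (GEA (V := V) ar I lt) ∧
    ClosedSubst (GEA (V := V) ar I lt) ∧
    -- `(⊒∼, ⊐)` is a stable order pair on non-variable terms
    (∀ t : Term F ar V, t.IsApp → QGES ar I lt prec Im t t) ∧
    Transitive (QGES (V := V) ar I lt prec Im) ∧
    (∀ s : Term F ar V, ¬ QGTS ar I lt prec Im s s) ∧
    Transitive (QGTS (V := V) ar I lt prec Im) ∧
    (∀ s t u v : Term F ar V, QGES ar I lt prec Im s t → QGTS ar I lt prec Im t u →
      QGES ar I lt prec Im u v → QGTS ar I lt prec Im s v) ∧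
    ClosedSubst (QGES (V := V) ar I lt prec Im) ∧
    ClosedSubst (QGTS (V := V) ar I lt prec Im) ∧
    -- `⊐` is well-founded
    WellFounded (fun s t : Term F ar V => QGTS ar I lt prec Im t s) ∧
    -- harmony of `≥_A` and `⊒∼`
    (∀ (f : F) (ss : Fin (ar f) → Term F ar V) (i : Fin (ar f)) (t : Term F ar V),
      GEA ar I lt (ss i) t →
      QGES ar I lt prec Im (Term.app f ss) (Term.app f (Function.update ss i t))) := by
  classical
  -- composition helpers for RC / lt
  have rcl : ∀ {a b c : A}, RC lt a b → lt b c → lt a c := by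
    rintro a b c (h | rfl) h'
    · exact lt_trans h h'
    · exact h'
  have lcr : ∀ {a b c : A}, lt a b → RC lt b c → lt a c := by
    rintro a b c h (h' | rfl)
    · exact lt_trans h h'
    · exact h
  have rcrc : ∀ {a b c : A}, RC lt a b → RC lt b c → RC lt a c := by
    rintro a b c (h | rfl) h'
    · exact Or.inl (lcr h h')
    · exact h'
  refine ⟨?_, ?_, ?_, ?_, ?_, ?_, ?_, ?_, ?_, ?_, ?_, ?_, ?_⟩
  · -- GEA reflexive
    intro t α; exact Or.inr rfl
  · -- GEA transitive
    intro s t u h1 h2 α; exact rcrc (h2 α) (h1 α)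
  · -- GEA closed under contexts
    intro f args i s t h α
    show RC lt (I f fun j => (Function.update args i t j).eval I α)
      (I f fun j => (Function.update args i s j).eval I α)
    rw [eval_update' I α f args i t, eval_update' I α f args i s,
      show Function.update (fun j => (args j).eval I α) i (t.eval I α)
        = Function.update (Function.update (fun j => (args j).eval I α) i (s.eval I α)) i
            (t.eval I α) from (Function.update_idem _ _ _).symm]
    refine mono_aux I lt hmono f _ i _ ?_
    rw [Function.update_self]
    exact h α
  · -- GEA closed under substitutions
    intro σ s t h α
    rw [eval_subst' I σ α s, eval_subst' I σ α t]
    exact h _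
  · -- QGES reflexive on applications
    intro t ht
    cases t with
    | var v => exact absurd ht id
    | app f ts => exact ⟨f, ts, f, ts, rfl, rfl, Or.inr ⟨fun α => Or.inr rfl, prec_refl f⟩⟩
  · -- QGES transitive
    rintro s t u ⟨f, ss, g, ts, rfl, rfl, c1⟩ ⟨g', ts', h, us, heq, rfl, c2⟩
    injection heq with hg hts
    subst hg
    obtain rfl := eq_of_heq hts
    refine ⟨f, ss, h, us, rfl, rfl, ?_⟩
    rcases c1 with c1 | ⟨c1, p1⟩ <;> rcases c2 with c2 | ⟨c2, p2⟩
    · exact Or.inl fun α => lt_trans (c2 α) (c1 α)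
    · exact Or.inl fun α => rcl (c2 α) (c1 α)
    · exact Or.inl fun α => lcr (c2 α) (c1 α)
    · exact Or.inr ⟨fun α => rcrc (c2 α) (c1 α), prec_trans _ _ _ p1 p2⟩
  · -- QGTS irreflexive
    rintro s ⟨f, ss, g, ts, rfl, heq, c⟩
    injection heq with hg hts
    subst hg
    obtain rfl := eq_of_heq hts
    rcases c with c | ⟨-, -, np⟩
    · exact lt_irrefl _ (c fun _ => Classical.arbitrary A)
    · exact np (prec_refl f)
  · -- QGTS transitive
    rintro s t u ⟨f, ss, g, ts, rfl, rfl, c1⟩ ⟨g', ts', h, us, heq, rfl, c2⟩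
    injection heq with hg hts
    subst hg
    obtain rfl := eq_of_heq hts
    refine ⟨f, ss, h, us, rfl, rfl, ?_⟩
    rcases c1 with c1 | ⟨c1, p1, np1⟩ <;> rcases c2 with c2 | ⟨c2, p2, np2⟩
    · exact Or.inl fun α => lt_trans (c2 α) (c1 α)
    · exact Or.inl fun α => rcl (c2 α) (c1 α)
    · exact Or.inl fun α => lcr (c2 α) (c1 α)
    · exact Or.inr ⟨fun α => rcrc (c2 α) (c1 α), prec_trans _ _ _ p1 p2,
        fun hp => np1 (prec_trans _ _ _ p2 hp)⟩
  · -- compatibility QGES ∘ QGTS ∘ QGES ⊆ QGTS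
    rintro s t u v ⟨f, ss, g, ts, rfl, rfl, c1⟩ ⟨g', ts', h, us, heq1, rfl, c2⟩
      ⟨h', us', k, vs, heq2, rfl, c3⟩
    injection heq1 with hg hts
    subst hg
    obtain rfl := eq_of_heq hts
    injection heq2 with hh hus
    subst hh
    obtain rfl := eq_of_heq hus
    refine ⟨f, ss, k, vs, rfl, rfl, ?_⟩
    rcases c1 with c1 | ⟨c1, p1⟩ <;> rcases c2 with c2 | ⟨c2, p2, np2⟩ <;>
      rcases c3 with c3 | ⟨c3, p3⟩
    · exact Or.inl fun α => lt_trans (lt_trans (c3 α) (c2 α)) (c1 α)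
    · exact Or.inl fun α => lt_trans (rcl (c3 α) (c2 α)) (c1 α)
    · exact Or.inl fun α => lt_trans (lcr (c3 α) (c2 α)) (c1 α)
    · exact Or.inl fun α => rcl (rcrc (c3 α) (c2 α)) (c1 α)
    · exact Or.inl fun α => lcr (lt_trans (c3 α) (c2 α)) (c1 α)
    · exact Or.inl fun α => lcr (rcl (c3 α) (c2 α)) (c1 α)
    · exact Or.inl fun α => lcr (lcr (c3 α) (c2 α)) (c1 α)
    · refine Or.inr ⟨fun α => rcrc (rcrc (c3 α) (c2 α)) (c1 α),
        prec_trans _ _ _ (prec_trans _ _ _ p1 p2) p3, fun hp => np2 ?_⟩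
      exact prec_trans _ _ _ p3 (prec_trans _ _ _ hp p1)
  · -- QGES closed under substitutions
    rintro σ s t ⟨f, ss, g, ts, rfl, rfl, c⟩
    refine ⟨f, fun i => (ss i).subst σ, g, fun i => (ts i).subst σ, rfl, rfl, ?_⟩
    rcases c with c | ⟨c, p⟩
    · refine Or.inl fun α => ?_
      have := c fun v => (σ v).eval I α
      simpa [Term.subst, evalSharp, eval_subst'] using this
    · refine Or.inr ⟨fun α => ?_, p⟩
      have := c fun v => (σ v).eval I α
      simpa [Term.subst, evalSharp, eval_subst'] using this
  · -- QGTS closed under substitutions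
    rintro σ s t ⟨f, ss, g, ts, rfl, rfl, c⟩
    refine ⟨f, fun i => (ss i).subst σ, g, fun i => (ts i).subst σ, rfl, rfl, ?_⟩
    rcases c with c | ⟨c, p⟩
    · refine Or.inl fun α => ?_
      have := c fun v => (σ v).eval I α
      simpa [Term.subst, evalSharp, eval_subst'] using this
    · refine Or.inr ⟨fun α => ?_, p.1, p.2⟩
      have := c fun v => (σ v).eval I α
      simpa [Term.subst, evalSharp, eval_subst'] using this
  · -- well-foundedness of QGTS
    set Q : F → F → Prop := fun a b => prec b a ∧ ¬ prec a b with hQ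
    have Qwf : WellFounded Q := by
      haveI : IsTrans F Q := ⟨fun a b c h1 h2 =>
        ⟨prec_trans _ _ _ h2.1 h1.1, fun hp => h1.2 (prec_trans _ _ _ hp h2.1)⟩⟩
      haveI : IsIrrefl F Q := ⟨fun a h => h.2 h.1⟩
      exact Finite.wellFounded_of_trans_of_irrefl Q
    set QO : Option F → Option F → Prop :=
      fun a b => ∃ f g, a = some f ∧ b = some g ∧ Q f g with hQO
    have QOwf : WellFounded QO := by
      have hs : ∀ f, Acc QO (some f) := by
        intro f
        induction f using Qwf.induction with
        | _ f ih =>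
          constructor
          rintro b ⟨f', g, rfl, hg, hq⟩
          obtain rfl : g = f := (Option.some.inj hg).symm
          exact ih f' hq
      constructor
      intro a
      cases a with
      | none =>
        constructor
        rintro b ⟨f', g, rfl, hg, hq⟩
        cases hg
      | some f => exact hs f
    have lexwf : WellFounded (Prod.Lex lt QO) := WellFounded.prod_lex lt_wf QOwf
    set α₀ : V → A := fun _ => Classical.arbitrary A with hα₀
    set rootO : Term F ar V → Option F := fun t =>
      match t with
      | .var _ => none
      | .app f _ => some f
      with hrootO
    set μ : Term F ar V → A × Option F :=
      fun t => (evalSharp ar I Im α₀ t, rootO t) with hμ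
    refine Subrelation.wf (r := InvImage (Prod.Lex lt QO) μ) ?_ (InvImage.wf μ lexwf)
    rintro s t ⟨f, ss, g, ts, ht, hs, c⟩
    subst ht; subst hs
    rcases c with c | ⟨c, p, np⟩
    · exact Prod.Lex.left _ _ (c α₀)
    · rcases c α₀ with h | h
      · exact Prod.Lex.left _ _ h
      · refine hμ ▸ ?_
        show Prod.Lex lt QO (evalSharp ar I Im α₀ (Term.app g ts), rootO (Term.app g ts))
          (evalSharp ar I Im α₀ (Term.app f ss), rootO (Term.app f ss))
        rw [h]
        exact Prod.Lex.right _ ⟨g, f, rfl, rfl, p, np⟩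
  · -- harmony
    intro f ss i t h
    refine ⟨f, ss, f, Function.update ss i t, rfl, rfl, Or.inr ⟨fun α => ?_, prec_refl f⟩⟩
    show RC lt (Im f fun j => (Function.update ss i t j).eval I α)
      (Im f fun j => (ss j).eval I α)
    rw [eval_update' I α f ss i t]
    exact mono_aux Im lt hmonoS f _ i _ (h α)
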